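/- Let G be a finite subgroup of O(2n+1), n ≥ 2, such that every nontrivial element of G has eigenspace of eigenvalue 1 of dimension at most 1. Then there exists a unit vector v ∈ ℝ^(2n+1), a character χ: G → {±1}, such that every g ∈ G satisfies g(v) = χ(g)·v and g preserves the orthogonal complement of v, and the restriction of G to the orthogonal complement {v}^⊥ ≅ ℝ^(2n) acts freely on the unit sphere S^(2n-1) of {v}^⊥. -/

import Mathlib

set_option maxHeartbeats 1600000
set_option synthInstance.maxHeartbeats 400000

/-- The dimension of the eigenspace of eigenvalue 1 of (the linear map given by) a matrix. -/
noncomputable def fixedSpaceDim {m : ℕ} (g : Matrix (Fin m) (Fin m) ℝ) : ℕ :=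
  Module.finrank ℝ ↥(Module.End.eigenspace (Matrix.toLin' g) 1)

namespace SplitAux
open Matrix

variable {m : ℕ}

abbrev Orth (g : Matrix (Fin m) (Fin m) ℝ) : Prop := g ∈ Matrix.orthogonalGroup (Fin m) ℝ

lemma star_eq_t (g : Matrix (Fin m) (Fin m) ℝ) : star g = gᵀ := by
  rw [Matrix.star_eq_conjTranspose, Matrix.conjTranspose_eq_transpose_of_trivial]

lemma t_mul_self {g : Matrix (Fin m) (Fin m) ℝ} (hg : Orth g) : gᵀ * g = 1 := by
  have := (Matrix.mem_unitaryGroup_iff').mp hg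
  rwa [star_eq_t] at this

lemma self_mul_t {g : Matrix (Fin m) (Fin m) ℝ} (hg : Orth g) : g * gᵀ = 1 := by
  have := (Matrix.mem_unitaryGroup_iff).mp hg
  rwa [star_eq_t] at this

lemma t_mulVec_mulVec {g : Matrix (Fin m) (Fin m) ℝ} (hg : Orth g) (x : Fin m → ℝ) :
    gᵀ *ᵥ (g *ᵥ x) = x := by
  rw [Matrix.mulVec_mulVec, t_mul_self hg, Matrix.one_mulVec]

lemma dot_mulVec_mulVec {g : Matrix (Fin m) (Fin m) ℝ} (hg : Orth g) (x y : Fin m → ℝ) :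
    (g *ᵥ x) ⬝ᵥ (g *ᵥ y) = x ⬝ᵥ y := by
  rw [Matrix.dotProduct_mulVec, ← Matrix.mulVec_transpose, t_mulVec_mulVec hg]

lemma dot_mulVec_left {g : Matrix (Fin m) (Fin m) ℝ} (x y : Fin m → ℝ) :
    x ⬝ᵥ (g *ᵥ y) = (gᵀ *ᵥ x) ⬝ᵥ y := by
  rw [Matrix.dotProduct_mulVec, Matrix.mulVec_transpose]

lemma det_pm {g : Matrix (Fin m) (Fin m) ℝ} (hg : Orth g) : g.det = 1 ∨ g.det = -1 := by
  have h := congrArg Matrix.det (t_mul_self hg)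
  rw [Matrix.det_mul, Matrix.det_transpose, Matrix.det_one] at h
  exact mul_self_eq_one_iff.mp h

lemma neg_one_pow_pm : ((-1 : ℝ)) ^ m = 1 ∨ ((-1 : ℝ)) ^ m = -1 := by
  rcases Nat.even_or_odd m with h | h
  · exact Or.inl h.neg_one_pow
  · exact Or.inr h.neg_one_pow

/-- eigenvector existence -/
lemma exists_fixed {g : Matrix (Fin m) (Fin m) ℝ} (hg : Orth g) (hdet : g.det ≠ (-1) ^ m) :
    ∃ w : Fin m → ℝ, w ≠ 0 ∧ g *ᵥ w = w := by
  have hc : g.det * (-1) ^ m ≠ 1 := by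
    intro h1
    apply hdet
    rcases det_pm hg with hd | hd <;> rcases neg_one_pow_pm (m := m) with hp | hp <;>
      rw [hd, hp] at h1 ⊢ <;> norm_num at h1
  have hD : (g - 1).det = 0 := by
    by_contra hD
    have h1 : (g - 1)ᵀ = gᵀ * (1 - g) := by
      rw [Matrix.mul_sub, Matrix.mul_one, t_mul_self hg, Matrix.transpose_sub,
        Matrix.transpose_one]
    have h2 : (g - 1).det = g.det * ((-1) ^ m * (g - 1).det) := by
      calc (g - 1).det = (g - 1)ᵀ.det := (Matrix.det_transpose _).symm
      _ = gᵀ.det * (1 - g).det := by rw [h1, Matrix.det_mul]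
      _ = g.det * ((-1) ^ m * (g - 1).det) := by
          rw [Matrix.det_transpose, ← neg_sub, Matrix.det_neg, Fintype.card_fin]
    have h3 : g.det * (-1) ^ m * (g - 1).det = 1 * (g - 1).det := by ring_nf; linarith [h2]
    exact hc (mul_right_cancel₀ hD h3)
  obtain ⟨w, hw0, hw⟩ := (Matrix.exists_mulVec_eq_zero_iff).mpr hD
  rw [Matrix.sub_mulVec, Matrix.one_mulVec] at hw
  exact ⟨w, hw0, sub_eq_zero.mp hw⟩



noncomputable def Fix (g : Matrix (Fin m) (Fin m) ℝ) : Submodule ℝ (Fin m → ℝ) :=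
  Module.End.eigenspace (Matrix.toLin' g) 1

lemma mem_Fix {g : Matrix (Fin m) (Fin m) ℝ} {w : Fin m → ℝ} : w ∈ Fix g ↔ g *ᵥ w = w := by
  rw [Fix, Module.End.mem_eigenspace_iff, Matrix.toLin'_apply, one_smul]

lemma fixedSpaceDim_eq (g : Matrix (Fin m) (Fin m) ℝ) :
    fixedSpaceDim g = Module.finrank ℝ (Fix g) := rfl

lemma pair_indep {v w : Fin m → ℝ} (hv : v ≠ 0) (hvw : v ⬝ᵥ w = 0) (hw : w ≠ 0) :
    LinearIndependent ℝ ![v, w] := by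
  rw [LinearIndependent.pair_iff]
  intro s t hst
  have h1 : v ⬝ᵥ (s • v + t • w) = s * (v ⬝ᵥ v) := by
    simp [dotProduct_add, dotProduct_smul, hvw, smul_eq_mul]
  rw [hst] at h1
  simp only [dotProduct_zero] at h1
  have hvv : v ⬝ᵥ v ≠ 0 := fun h => hv (dotProduct_self_eq_zero.mp h)
  have hs : s = 0 := by
    rcases mul_eq_zero.mp h1.symm with h | h
    · exact h
    · exact absurd h hvv
  refine ⟨hs, ?_⟩
  rw [hs, zero_smul, zero_add] at hst
  rcases smul_eq_zero.mp hst with h | h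
  · exact h
  · exact absurd h hw

lemma two_le_dim {g : Matrix (Fin m) (Fin m) ℝ} {v w : Fin m → ℝ}
    (hv : g *ᵥ v = v) (hw : g *ᵥ w = w) (hind : LinearIndependent ℝ ![v, w]) :
    2 ≤ fixedSpaceDim g := by
  have hle : Submodule.span ℝ (Set.range ![v, w]) ≤ Fix g := by
    rw [Submodule.span_le]
    rintro x ⟨i, rfl⟩
    fin_cases i
    · exact mem_Fix.mpr hv
    · exact mem_Fix.mpr hw
  have hcard : Module.finrank ℝ (Submodule.span ℝ (Set.range ![v, w])) = 2 := by
    rw [finrank_span_eq_card hind, Fintype.card_fin]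
  rw [fixedSpaceDim_eq]
  rw [← hcard]
  exact Submodule.finrank_mono hle

lemma fixed_smul {g : Matrix (Fin m) (Fin m) ℝ} (hdim : fixedSpaceDim g ≤ 1)
    {v w : Fin m → ℝ} (hv0 : v ≠ 0) (hv : g *ᵥ v = v) (hw : g *ᵥ w = w) :
    ∃ c : ℝ, w = c • v := by
  by_cases hmem : w ∈ Submodule.span ℝ {v}
  · obtain ⟨c, hc⟩ := Submodule.mem_span_singleton.mp hmem
    exact ⟨c, hc.symm⟩
  · exfalso
    have hind : LinearIndependent ℝ ![v, w] := by
      rw [LinearIndependent.pair_iff]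
      intro s t hst
      rcases eq_or_ne t 0 with ht | ht
      · rw [ht, zero_smul, add_zero] at hst
        rcases smul_eq_zero.mp hst with h | h
        · exact ⟨h, ht⟩
        · exact absurd h hv0
      · exfalso
        apply hmem
        have h2 : t • w = (-s) • v := by
          linear_combination (norm := module) hst
        have h3 : w = (t⁻¹ * -s) • v := by
          rw [mul_smul, ← h2, inv_smul_smul₀ ht]
        rw [h3]
        exact Submodule.smul_mem _ _ (Submodule.mem_span_singleton_self v)
    exact absurd (le_trans (two_le_dim hv hw hind) hdim) (by norm_num)

lemma no_two_fixed {g : Matrix (Fin m) (Fin m) ℝ} (hdim : fixedSpaceDim g ≤ 1)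
    {v w : Fin m → ℝ} (hv0 : v ≠ 0) (hv : g *ᵥ v = v) (hw : g *ᵥ w = w)
    (hvw : v ⬝ᵥ w = 0) (hw0 : w ≠ 0) : False := by
  exact absurd (le_trans (two_le_dim hv hw (pair_indep hv0 hvw hw0)) hdim) (by norm_num)


lemma sym_of_invol {g : Matrix (Fin m) (Fin m) ℝ} (hg : Orth g) (hgg : g * g = 1) :
    gᵀ = g := by
  calc gᵀ = gᵀ * (g * g) := by rw [hgg, mul_one]
  _ = (gᵀ * g) * g := by rw [mul_assoc]
  _ = g := by rw [t_mul_self hg, one_mul]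

lemma invol_fixes_sum {g : Matrix (Fin m) (Fin m) ℝ} (hgg : g * g = 1) (u : Fin m → ℝ) :
    g *ᵥ (u + g *ᵥ u) = u + g *ᵥ u := by
  rw [Matrix.mulVec_add, Matrix.mulVec_mulVec, hgg, Matrix.one_mulVec, add_comm]

lemma invol_perp_neg {g : Matrix (Fin m) (Fin m) ℝ} (hg : Orth g) (hgg : g * g = 1)
    (hdim : fixedSpaceDim g ≤ 1) {v : Fin m → ℝ} (hv0 : v ≠ 0) (hv : g *ᵥ v = v)
    {u : Fin m → ℝ} (hu : v ⬝ᵥ u = 0) : g *ᵥ u = -u := by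
  obtain ⟨c, hc⟩ := fixed_smul hdim hv0 hv (invol_fixes_sum hgg u)
  have hdot : v ⬝ᵥ (u + g *ᵥ u) = 0 := by
    rw [dotProduct_add, hu, Matrix.dotProduct_mulVec, ← Matrix.mulVec_transpose,
      sym_of_invol hg hgg, hv, hu, add_zero]
  rw [hc, dotProduct_smul, smul_eq_mul] at hdot
  have hvv : v ⬝ᵥ v ≠ 0 := fun h => hv0 (dotProduct_self_eq_zero.mp h)
  have hc0 : c = 0 := by
    rcases mul_eq_zero.mp hdot with h | h
    · exact h
    · exact absurd h hvv
  rw [hc0, zero_smul] at hc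
  linear_combination (norm := module) hc

lemma invol_eq_neg_one {g : Matrix (Fin m) (Fin m) ℝ} (hgg : g * g = 1)
    (hnofix : ∀ w : Fin m → ℝ, g *ᵥ w = w → w = 0) : g = -1 := by
  apply Matrix.toLin'.injective
  apply LinearMap.ext
  intro u
  rw [Matrix.toLin'_apply, Matrix.toLin'_apply]
  have h0 := hnofix _ (invol_fixes_sum hgg u)
  rw [Matrix.neg_mulVec, Matrix.one_mulVec]
  linear_combination (norm := module) h0

lemma invol_form {g : Matrix (Fin m) (Fin m) ℝ} (hg : Orth g) (hgg : g * g = 1)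
    (hdim : fixedSpaceDim g ≤ 1) {v : Fin m → ℝ} (hv1 : v ⬝ᵥ v = 1) (hv : g *ᵥ v = v) :
    g = (2 : ℝ) • Matrix.vecMulVec v v - 1 := by
  have hv0 : v ≠ 0 := by
    intro h
    rw [h] at hv1
    simp at hv1
  apply Matrix.toLin'.injective
  apply LinearMap.ext
  intro u
  rw [Matrix.toLin'_apply, Matrix.toLin'_apply]
  have hdec : g *ᵥ u = (v ⬝ᵥ u) • v + g *ᵥ (u - (v ⬝ᵥ u) • v) := by
    rw [Matrix.mulVec_sub, Matrix.mulVec_smul, hv]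
    module
  have hperp : v ⬝ᵥ (u - (v ⬝ᵥ u) • v) = 0 := by
    rw [dotProduct_sub, dotProduct_smul, hv1, smul_eq_mul, mul_one, sub_self]
  rw [invol_perp_neg hg hgg hdim hv0 hv hperp] at hdec
  have hrhs : ((2 : ℝ) • Matrix.vecMulVec v v - 1) *ᵥ u = (2 : ℝ) • ((v ⬝ᵥ u) • v) - u := by
    rw [Matrix.sub_mulVec, Matrix.one_mulVec, Matrix.smul_mulVec]
    congr 1
    congr 1
    funext i
    simp only [Matrix.vecMulVec_apply, Matrix.mulVec, dotProduct, Pi.smul_apply,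
      smul_eq_mul, Finset.mul_sum]
    rw [Finset.sum_mul]
    apply Finset.sum_congr rfl
    intro j _
    ring
  rw [hrhs, hdec]
  module

lemma invol_det (hm : Odd m) {g : Matrix (Fin m) (Fin m) ℝ} (hg : Orth g) (hgg : g * g = 1)
    (hdim : fixedSpaceDim g ≤ 1) {v : Fin m → ℝ} (hv1 : v ⬝ᵥ v = 1) (hv : g *ᵥ v = v) :
    g.det = 1 := by
  rw [invol_form hg hgg hdim hv1 hv]
  have h1 : (2 : ℝ) • Matrix.vecMulVec v v - 1 = -(1 - (2 : ℝ) • Matrix.vecMulVec v v) := by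
    rw [neg_sub]
  rw [h1, Matrix.det_neg, Fintype.card_fin]
  have h2 : (1 : Matrix (Fin m) (Fin m) ℝ) - (2 : ℝ) • Matrix.vecMulVec v v
      = 1 + Matrix.replicateCol (Fin 1) ((-2 : ℝ) • v) * Matrix.replicateRow (Fin 1) v := by
    rw [Matrix.vecMulVec_eq (Fin 1), Matrix.replicateCol_smul, Matrix.smul_mul, neg_smul,
      ← sub_eq_add_neg]
    rfl
  rw [h2]
  erw [Matrix.det_one_add_replicateCol_mul_replicateRow (ι := Fin 1)]
  rw [dotProduct_smul, hv1]
  rw [hm.neg_one_pow]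
  norm_num

end SplitAux

namespace SplitAux
open Matrix

variable {m : ℕ} {G : Subgroup (Matrix.orthogonalGroup (Fin m) ℝ)}

/-- the underlying matrix of an element of the subgroup -/
def mat (g : ↥G) : Matrix (Fin m) (Fin m) ℝ :=
  ((g : Matrix.orthogonalGroup (Fin m) ℝ) : Matrix (Fin m) (Fin m) ℝ)

lemma mat_mul (g h : ↥G) : mat (g * h) = mat g * mat h := rfl

lemma mat_one : mat (1 : ↥G) = 1 := rfl

lemma mat_orth (g : ↥G) : Orth (mat g) := (g : Matrix.orthogonalGroup (Fin m) ℝ).2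

lemma mat_inv (g : ↥G) : mat g⁻¹ = (mat g)ᵀ := by
  have : mat g⁻¹ = star (mat g) := rfl
  rw [this, star_eq_t]

lemma mat_inv_mulVec_mulVec (g : ↥G) (x : Fin m → ℝ) : mat g⁻¹ *ᵥ (mat g *ᵥ x) = x := by
  rw [mat_inv, t_mulVec_mulVec (mat_orth g)]

lemma mat_mulVec_inv_mulVec (g : ↥G) (x : Fin m → ℝ) : mat g *ᵥ (mat g⁻¹ *ᵥ x) = x := by
  have h := mat_inv_mulVec_mulVec g⁻¹ x
  rwa [inv_inv] at h

lemma mat_eq_one {g : ↥G} (h : mat g = 1) : g = 1 := by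
  apply Subtype.ext
  apply Subtype.ext
  exact h

lemma smul_cancel {v : Fin m → ℝ} (hv : v ≠ 0) {c d : ℝ} (h : c • v = d • v) : c = d := by
  have h2 : (c - d) • v = 0 := by
    rw [sub_smul, h, sub_self]
  rcases smul_eq_zero.mp h2 with h3 | h3
  · linarith [h3]
  · exact absurd h3 hv

lemma mat_pow_neg {g : ↥G} {v : Fin m → ℝ} (h : mat g *ᵥ v = -v) (r : ℕ) :
    mat (g ^ r) *ᵥ v = ((-1 : ℝ) ^ r) • v := by
  induction r with
  | zero => rw [pow_zero, mat_one, Matrix.one_mulVec, pow_zero, one_smul]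
  | succ r ih =>
      rw [pow_succ, mat_mul, ← Matrix.mulVec_mulVec, h, Matrix.mulVec_neg, ih, pow_succ]
      ext i
      simp

lemma map_Fix (a g : ↥G) :
    Submodule.map (Matrix.mulVecLin (mat a)) (Fix (mat g)) = Fix (mat (a * g * a⁻¹)) := by
  ext u
  rw [Submodule.mem_map]
  constructor
  · rintro ⟨x, hx, rfl⟩
    rw [mem_Fix] at hx
    rw [mem_Fix, Matrix.mulVecLin_apply, mat_mul, mat_mul, ← Matrix.mulVec_mulVec,
      ← Matrix.mulVec_mulVec, mat_inv_mulVec_mulVec, hx]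
  · intro hu
    rw [mem_Fix] at hu
    refine ⟨mat a⁻¹ *ᵥ u, ?_, ?_⟩
    · rw [mem_Fix]
      have h2 : mat a *ᵥ (mat g *ᵥ (mat a⁻¹ *ᵥ u)) = u := by
        rw [Matrix.mulVec_mulVec, Matrix.mulVec_mulVec, ← mat_mul, ← mat_mul]
        exact hu
      calc mat g *ᵥ (mat a⁻¹ *ᵥ u) = mat a⁻¹ *ᵥ (mat a *ᵥ (mat g *ᵥ (mat a⁻¹ *ᵥ u))) := by
            rw [mat_inv_mulVec_mulVec]
      _ = mat a⁻¹ *ᵥ u := by rw [h2]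
    · rw [Matrix.mulVecLin_apply, mat_mulVec_inv_mulVec]

lemma conj_ne_one {Γ : Type*} [Group Γ] {k h : Γ} (hh : h ≠ 1) : k * h * k⁻¹ ≠ 1 := by
  intro he
  apply hh
  have h1 : k * h * k⁻¹ * k = 1 * k := by rw [he]
  rw [one_mul, mul_assoc, inv_mul_cancel, mul_one] at h1
  exact mul_left_cancel (h1.trans (mul_one k).symm)


lemma dot_self_pos {w : Fin m → ℝ} (hw0 : w ≠ 0) : 0 < w ⬝ᵥ w := by
  rcases lt_or_eq_of_le (Finset.sum_nonneg (fun i _ => mul_self_nonneg (w i)) :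
      (0:ℝ) ≤ w ⬝ᵥ w) with h | h
  · exact h
  · exact absurd (dotProduct_self_eq_zero.mp h.symm) hw0

lemma unit_scale {w : Fin m → ℝ} (hw0 : w ≠ 0) :
    ((Real.sqrt (w ⬝ᵥ w))⁻¹ • w) ⬝ᵥ ((Real.sqrt (w ⬝ᵥ w))⁻¹ • w) = 1 := by
  rw [smul_dotProduct, dotProduct_smul, smul_eq_mul, smul_eq_mul, ← mul_assoc,
    ← Real.sqrt_inv]
  rw [Real.mul_self_sqrt (inv_nonneg.mpr (le_of_lt (dot_self_pos hw0)))]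
  have := dot_self_pos hw0
  field_simp

/-- The set of axes of nontrivial elements of `K`. -/
def AxisSet (K : Subgroup ↥G) : Type :=
  {L : Submodule ℝ (Fin m → ℝ) // ∃ k : ↥K, k ≠ 1 ∧ L = Fix (mat (k : ↥G))}

noncomputable instance axisAction (K : Subgroup ↥G) : MulAction ↥K (AxisSet K) where
  smul k L := ⟨Submodule.map (Matrix.mulVecLin (mat (k : ↥G))) L.1, by
    obtain ⟨h, hh1, hhL⟩ := L.2
    exact ⟨k * h * k⁻¹, conj_ne_one hh1, by rw [hhL, map_Fix]; rfl⟩⟩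
  one_smul L := Subtype.ext (by
    show Submodule.map (Matrix.mulVecLin (mat ((1 : ↥K) : ↥G))) L.1 = L.1
    rw [show ((1 : ↥K) : ↥G) = 1 from rfl, mat_one, Matrix.mulVecLin_one, Submodule.map_id])
  mul_smul a b L := Subtype.ext (by
    show Submodule.map (Matrix.mulVecLin (mat ((a * b : ↥K) : ↥G))) L.1
      = Submodule.map (Matrix.mulVecLin (mat (a : ↥G)))
          (Submodule.map (Matrix.mulVecLin (mat (b : ↥G))) L.1)
    rw [show ((a * b : ↥K) : ↥G) = (a : ↥G) * (b : ↥G) from rfl, mat_mul,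
      Matrix.mulVecLin_mul, Submodule.map_comp])

lemma axis_smul_val (K : Subgroup ↥G) (k : ↥K) (L : AxisSet K) :
    (k • L).1 = Submodule.map (Matrix.mulVecLin (mat (k : ↥G))) L.1 := rfl

/-- the axis of a nontrivial element -/
noncomputable def axis {K : Subgroup ↥G} (k : ↥K) (hk : k ≠ 1) : AxisSet K :=
  ⟨Fix (mat (k : ↥G)), k, hk, rfl⟩

instance axisFinite (K : Subgroup ↥G) [Finite ↥G] : Finite (AxisSet K) := by
  have hfin : (Set.range (fun k : ↥K => Fix (mat (k : ↥G)))).Finite := Set.finite_range _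
  have hsub : {L : Submodule ℝ (Fin m → ℝ) | ∃ k : ↥K, k ≠ 1 ∧ L = Fix (mat (k : ↥G))}
      ⊆ Set.range (fun k : ↥K => Fix (mat (k : ↥G))) := by
    rintro L ⟨k, _, rfl⟩
    exact ⟨k, rfl⟩
  exact (hfin.subset hsub).to_subtype

theorem odd_case [Finite ↥G] (hm : Odd m)
    (heig : ∀ g : ↥G, g ≠ 1 → fixedSpaceDim (mat g) ≤ 1)
    (K : Subgroup ↥G) (hKdet : ∀ g : ↥G, g ∈ K → (mat g).det = 1)
    (hodd : Odd (Nat.card ↥K)) (g₀ : ↥K) (hg₀1 : g₀ ≠ 1) :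
    ∃ v : Fin m → ℝ, v ⬝ᵥ v = 1 ∧ ∀ g : ↥G, g ∈ K → mat g *ᵥ v = v := by
  classical
  haveI : Fintype ↥K := Fintype.ofFinite _
  set N := Fintype.card ↥K with hN_def
  have hoddN : Odd N := by rwa [Nat.card_eq_fintype_card] at hodd
  have coe_ne : ∀ k : ↥K, k ≠ 1 → ((k : ↥G) ≠ 1) := by
    intro k hk h
    exact hk (Subtype.ext h)
  have exists_fix : ∀ k : ↥K, ∃ w, w ≠ 0 ∧ mat (k : ↥G) *ᵥ w = w := by
    intro k
    apply exists_fixed (mat_orth _)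
    rw [hKdet _ k.2, hm.neg_one_pow]
    norm_num
  have hdim : ∀ k : ↥K, k ≠ 1 → fixedSpaceDim (mat (k : ↥G)) ≤ 1 :=
    fun k hk => heig _ (coe_ne k hk)
  have hfin1 : ∀ k : ↥K, k ≠ 1 → Module.finrank ℝ (Fix (mat (k : ↥G))) = 1 := by
    intro k hk
    obtain ⟨w, hw0, hwf⟩ := exists_fix k
    have h1 : 0 < Module.finrank ℝ (Fix (mat (k : ↥G))) := by
      rw [Module.finrank_pos_iff]
      exact ⟨⟨w, mem_Fix.mpr hwf⟩, 0, by simp [Subtype.ext_iff, hw0]⟩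
    have h2 := hdim k hk
    rw [fixedSpaceDim_eq] at h2
    omega
  have no_neg : ∀ k : ↥K, ∀ v : Fin m → ℝ, v ≠ 0 → mat (k : ↥G) *ᵥ v = -v → False := by
    intro k v hv0 hkv
    have hord : Odd (orderOf k) := by
      rcases Nat.even_or_odd (orderOf k) with he | ho
      · exfalso
        have h2 : (2 : ℕ) ∣ N := dvd_trans he.two_dvd orderOf_dvd_card
        rw [Nat.odd_iff] at hoddN
        omega
      · exact ho
    have h1 := mat_pow_neg (g := (k : ↥G)) hkv (orderOf k)
    have hco : ((k : ↥G)) ^ (orderOf k) = 1 := by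
      rw [← SubgroupClass.coe_pow, pow_orderOf_eq_one, OneMemClass.coe_one]
    rw [hco, mat_one, Matrix.one_mulVec, hord.neg_one_pow] at h1
    apply hv0
    have h2 : (2 : ℝ) • v = 0 := by
      rw [two_smul]
      linear_combination (norm := module) h1
    rcases smul_eq_zero.mp h2 with h | h
    · norm_num at h
    · exact h
  -- instances
  haveI instA : Fintype (AxisSet K) := Fintype.ofFinite _
  haveI instFB : ∀ k : ↥K, Fintype (MulAction.fixedBy (AxisSet K) k) :=
    fun k => Fintype.ofFinite _
  haveI instOrb : ∀ a : AxisSet K, Fintype (MulAction.orbit ↥K a) :=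
    fun a => Fintype.ofFinite _
  haveI instStab : ∀ a : AxisSet K, Fintype ↥(MulAction.stabilizer ↥K a) :=
    fun a => Fintype.ofFinite _
  haveI instQ1 : Fintype (Quotient (MulAction.orbitRel ↥K (AxisSet K))) := Fintype.ofFinite _
  haveI instQ2 : Fintype (MulAction.orbitRel.Quotient ↥K (AxisSet K)) := instQ1
  -- smul of an axis
  have smul_axis : ∀ (k h : ↥K) (hh : h ≠ 1),
      k • axis h hh = axis (k * h * k⁻¹) (conj_ne_one hh) := by
    intro k h hh
    apply Subtype.ext
    rw [axis_smul_val]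
    show Submodule.map _ (Fix (mat (h : ↥G))) = Fix (mat ((k * h * k⁻¹ : ↥K) : ↥G))
    rw [map_Fix]
    rfl
  have mem_stab : ∀ (h : ↥K) (hh : h ≠ 1), h ∈ MulAction.stabilizer ↥K (axis h hh) := by
    intro h hh
    rw [MulAction.mem_stabilizer_iff, smul_axis h h hh]
    apply Subtype.ext
    show Fix (mat ((h * h * h⁻¹ : ↥K) : ↥G)) = Fix (mat (h : ↥G))
    rw [mul_inv_cancel_right]
  -- fixed points of a nontrivial element
  have fixedBy_eq : ∀ (k : ↥K) (hk : k ≠ 1),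
      MulAction.fixedBy (AxisSet K) k = {axis k hk} := by
    intro k hk
    ext x
    simp only [MulAction.mem_fixedBy, Set.mem_singleton_iff]
    constructor
    · intro hx
      obtain ⟨h, hh1, hhL⟩ := x.2
      obtain ⟨w, hw0, hwf⟩ := exists_fix h
      have hxval : Submodule.map (Matrix.mulVecLin (mat (k : ↥G))) x.1 = x.1 := by
        rw [← axis_smul_val K k x, hx]
      have hwmem : w ∈ x.1 := by rw [hhL]; exact mem_Fix.mpr hwf
      have hkw_mem : mat (k : ↥G) *ᵥ w ∈ x.1 := by
        rw [← hxval]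
        exact Submodule.mem_map.mpr ⟨w, hwmem, by rw [Matrix.mulVecLin_apply]⟩
      have hkw_fix : mat (h : ↥G) *ᵥ (mat (k : ↥G) *ᵥ w) = mat (k : ↥G) *ᵥ w := by
        have h5 := hkw_mem
        rw [hhL] at h5
        exact mem_Fix.mp h5
      obtain ⟨c, hc⟩ := fixed_smul (hdim h hh1) hw0 hwf hkw_fix
      have hnorm := dot_mulVec_mulVec (mat_orth ((k : ↥G))) w w
      rw [hc, smul_dotProduct, dotProduct_smul] at hnorm
      have hc2 : c * c = 1 := by
        have hww := dot_self_pos hw0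
        have h6 : c * (c * (w ⬝ᵥ w)) = w ⬝ᵥ w := by simpa using hnorm
        nlinarith
      have hkw : mat (k : ↥G) *ᵥ w = w := by
        rcases mul_self_eq_one_iff.mp hc2 with h1 | h1
        · rw [hc, h1, one_smul]
        · exfalso
          apply no_neg k w hw0
          rw [hc, h1]
          ext i
          simp
      have hle : x.1 ≤ Fix (mat (k : ↥G)) := by
        intro u hu
        rw [hhL] at hu
        obtain ⟨c', hc'⟩ := fixed_smul (hdim h hh1) hw0 hwf (mem_Fix.mp hu)
        rw [mem_Fix, hc', Matrix.mulVec_smul, hkw]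
      have hfk : Module.finrank ℝ (Fix (mat (k : ↥G))) ≤ Module.finrank ℝ x.1 := by
        rw [hhL, hfin1 h hh1]
        have h7 := hdim k hk
        rw [fixedSpaceDim_eq] at h7
        exact h7
      exact Subtype.ext (Submodule.eq_of_le_of_finrank_le hle hfk)
    · rintro rfl
      exact MulAction.mem_stabilizer_iff.mp (mem_stab k hk)
  -- cardinalities of fixed point sets
  have card_fixedBy_ne : ∀ (k : ↥K), k ≠ 1 →
      Fintype.card (MulAction.fixedBy (AxisSet K) k) = 1 := by
    intro k hk
    rw [Fintype.card_eq_one_iff]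
    refine ⟨⟨axis k hk, by rw [fixedBy_eq k hk]; rfl⟩, ?_⟩
    rintro ⟨y, hy⟩
    rw [fixedBy_eq k hk] at hy
    exact Subtype.ext hy
  have card_fixedBy_one :
      Fintype.card (MulAction.fixedBy (AxisSet K) (1 : ↥K)) = Fintype.card (AxisSet K) := by
    apply Fintype.card_congr
    apply Equiv.subtypeUnivEquiv
    intro x
    exact one_smul ↥K x
  -- Burnside
  have hburn := MulAction.sum_card_fixedBy_eq_card_orbits_mul_card_group ↥K (AxisSet K)
  set q := Fintype.card (Quotient (MulAction.orbitRel ↥K (AxisSet K))) with hq_def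
  have hsum : ∑ k : ↥K, Fintype.card (MulAction.fixedBy (AxisSet K) k)
      = Fintype.card (AxisSet K) + (N - 1) := by
    have h13 : ∑ x ∈ Finset.univ.erase (1 : ↥K),
        Fintype.card (MulAction.fixedBy (AxisSet K) x) = N - 1 := by
      rw [Finset.sum_congr rfl (fun k hk => card_fixedBy_ne k (Finset.ne_of_mem_erase hk)),
        Finset.sum_const, smul_eq_mul, mul_one,
        Finset.card_erase_of_mem (Finset.mem_univ _), Finset.card_univ]
    calc ∑ k : ↥K, Fintype.card (MulAction.fixedBy (AxisSet K) k)
        = Fintype.card (MulAction.fixedBy (AxisSet K) (1 : ↥K))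
          + ∑ x ∈ Finset.univ.erase (1 : ↥K), Fintype.card (MulAction.fixedBy (AxisSet K) x) :=
          (Finset.add_sum_erase Finset.univ _ (Finset.mem_univ (1 : ↥K))).symm
    _ = Fintype.card (AxisSet K) + (N - 1) := by rw [card_fixedBy_one, h13]
  rw [hsum] at hburn
  -- orbit bound
  have orbit_bound : ∀ a : AxisSet K, 3 * Fintype.card (MulAction.orbit ↥K a) ≤ N := by
    intro a
    obtain ⟨h, hh1, hhL⟩ := a.2
    have hstab : h ∈ MulAction.stabilizer ↥K a := by
      have ha : a = axis h hh1 := Subtype.ext hhL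
      rw [ha]
      exact mem_stab h hh1
    have hnt : Nontrivial ↥(MulAction.stabilizer ↥K a) := by
      refine ⟨⟨⟨h, hstab⟩, 1, ?_⟩⟩
      intro hcon
      exact hh1 (congrArg Subtype.val hcon)
    have h2 : 2 ≤ Fintype.card ↥(MulAction.stabilizer ↥K a) :=
      Fintype.one_lt_card_iff_nontrivial.mpr hnt
    have hdvd : Fintype.card ↥(MulAction.stabilizer ↥K a) ∣ N := by
      have h8 := Subgroup.card_subgroup_dvd_card (MulAction.stabilizer ↥K a)
      rwa [Nat.card_eq_fintype_card, Nat.card_eq_fintype_card] at h8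
    have h3 : 3 ≤ Fintype.card ↥(MulAction.stabilizer ↥K a) := by
      rcases Nat.even_or_odd (Fintype.card ↥(MulAction.stabilizer ↥K a)) with he | ho
      · exfalso
        have h9 : (2 : ℕ) ∣ N := dvd_trans he.two_dvd hdvd
        have h10 := hoddN
        rw [Nat.odd_iff] at h10
        omega
      · rw [Nat.odd_iff] at ho
        omega
    have hos := MulAction.card_orbit_mul_card_stabilizer_eq_card_group ↥K a
    calc 3 * Fintype.card (MulAction.orbit ↥K a)
        ≤ Fintype.card ↥(MulAction.stabilizer ↥K a) * Fintype.card (MulAction.orbit ↥K a) :=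
          Nat.mul_le_mul_right _ h3
    _ = N := by rw [mul_comm]; exact hos
  -- summing over orbits
  have card_A_eq : Fintype.card (AxisSet K)
      = ∑ ω : MulAction.orbitRel.Quotient ↥K (AxisSet K),
          Fintype.card (MulAction.orbit ↥K ω.out) := by
    rw [Fintype.card_congr (MulAction.selfEquivSigmaOrbits ↥K (AxisSet K)), Fintype.card_sigma]
  have h3A : 3 * Fintype.card (AxisSet K) ≤ q * N := by
    rw [card_A_eq, Finset.mul_sum]
    have hle2 : ∀ ω : MulAction.orbitRel.Quotient ↥K (AxisSet K),
        3 * Fintype.card (MulAction.orbit ↥K ω.out) ≤ N := fun ω => orbit_bound _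
    calc ∑ ω : MulAction.orbitRel.Quotient ↥K (AxisSet K),
        3 * Fintype.card (MulAction.orbit ↥K ω.out)
        ≤ ∑ _ω : MulAction.orbitRel.Quotient ↥K (AxisSet K), N :=
          Finset.sum_le_sum (fun ω _ => hle2 ω)
    _ = q * N := by
        rw [Finset.sum_const, smul_eq_mul, Finset.card_univ]
  -- arithmetic
  have hnontrivK : Nontrivial ↥K := ⟨⟨g₀, 1, hg₀1⟩⟩
  have hN2 : 2 ≤ N := Fintype.one_lt_card_iff_nontrivial.mpr hnontrivK
  have hN3 : 3 ≤ N := by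
    have h10 := hoddN
    rw [Nat.odd_iff] at h10
    omega
  have hA1 : 1 ≤ Fintype.card (AxisSet K) := by
    haveI : Nonempty (AxisSet K) := ⟨axis g₀ hg₀1⟩
    exact Fintype.card_pos
  have hcardA : Fintype.card (AxisSet K) = 1 := by
    have e1 : 3 * Fintype.card (AxisSet K) ≤ Fintype.card (AxisSet K) + (N - 1) := by
      rw [hburn]
      exact h3A
    have e5 : q * N < 2 * N := by
      rw [← hburn]
      omega
    have hq2 : q < 2 := by
      by_contra hq
      push_neg at hq
      have h11 : 2 * N ≤ q * N := Nat.mul_le_mul_right N hq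
      exact absurd (lt_of_le_of_lt h11 e5) (lt_irrefl _)
    have hq1 : 1 ≤ q := by
      by_contra hq
      push_neg at hq
      have hq0 : q = 0 := by omega
      rw [hq0, zero_mul] at hburn
      omega
    have hq : q = 1 := by omega
    rw [hq, one_mul] at hburn
    omega
  haveI hsub : Subsingleton (AxisSet K) :=
    Fintype.card_le_one_iff_subsingleton.mp (le_of_eq hcardA)
  -- conclusion
  obtain ⟨w, hw0, hwf⟩ := exists_fix g₀
  refine ⟨(Real.sqrt (w ⬝ᵥ w))⁻¹ • w, unit_scale hw0, ?_⟩
  intro g hgK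
  by_cases hk1 : (⟨g, hgK⟩ : ↥K) = 1
  · have hg1 : g = 1 := congrArg Subtype.val hk1
    rw [hg1, mat_one, Matrix.one_mulVec]
  · have haxeq : axis (⟨g, hgK⟩ : ↥K) hk1 = axis g₀ hg₀1 := Subsingleton.elim _ _
    have hFix : Fix (mat g) = Fix (mat (g₀ : ↥G)) := congrArg Subtype.val haxeq
    have hvmem : (Real.sqrt (w ⬝ᵥ w))⁻¹ • w ∈ Fix (mat (g₀ : ↥G)) :=
      Submodule.smul_mem _ _ (mem_Fix.mpr hwf)
    have h12 : (Real.sqrt (w ⬝ᵥ w))⁻¹ • w ∈ Fix (mat g) := by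
      rw [hFix]
      exact hvmem
    exact mem_Fix.mp h12

theorem invol_unique [Finite ↥G] (hm : Odd m) (hm5 : 5 ≤ m)
    (heig : ∀ g : ↥G, g ≠ 1 → fixedSpaceDim (mat g) ≤ 1)
    {s t : ↥G} (hs1 : s ≠ 1) (ht1 : t ≠ 1) (hss : s * s = 1) (htt : t * t = 1)
    (hsdet : (mat s).det = 1) (htdet : (mat t).det = 1) : s = t := by
  by_contra hne
  obtain ⟨ws, hws0, hwsf⟩ := exists_fixed (mat_orth s)
    (by rw [hsdet, hm.neg_one_pow]; norm_num)
  obtain ⟨wt, hwt0, hwtf⟩ := exists_fixed (mat_orth t)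
    (by rw [htdet, hm.neg_one_pow]; norm_num)
  set f : (Fin m → ℝ) →ₗ[ℝ] (Fin 2 → ℝ) := Matrix.mulVecLin (Matrix.of ![ws, wt]) with hf_def
  have hker : ∀ u ∈ LinearMap.ker f, ws ⬝ᵥ u = 0 ∧ wt ⬝ᵥ u = 0 := by
    intro u hu
    rw [LinearMap.mem_ker] at hu
    constructor
    · have h0 := congrFun hu 0
      simpa [hf_def, Matrix.mulVecLin_apply, Matrix.mulVec, dotProduct] using h0
    · have h1 := congrFun hu 1
      simpa [hf_def, Matrix.mulVecLin_apply, Matrix.mulVec, dotProduct] using h1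
  have hrank : 2 ≤ Module.finrank ℝ (LinearMap.ker f) := by
    have h1 := LinearMap.finrank_range_add_finrank_ker f
    have h2 : Module.finrank ℝ (LinearMap.range f) ≤ 2 := by
      have h4 : Module.finrank ℝ (LinearMap.range f) ≤ Module.finrank ℝ (Fin 2 → ℝ) :=
        Submodule.finrank_le _
      simpa using h4
    have h3 : Module.finrank ℝ (Fin m → ℝ) = m := by simp
    omega
  have hst1 : s * t ≠ 1 := by
    intro h
    apply hne
    rw [eq_inv_of_mul_eq_one_left h, inv_eq_of_mul_eq_one_left htt]
  have hle : LinearMap.ker f ≤ Fix (mat (s * t)) := by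
    intro u hu
    obtain ⟨hus, hut⟩ := hker u hu
    rw [mem_Fix, mat_mul, ← Matrix.mulVec_mulVec]
    rw [invol_perp_neg (mat_orth t) (by rw [← mat_mul, htt, mat_one]) (heig t ht1) hwt0 hwtf hut]
    rw [Matrix.mulVec_neg,
      invol_perp_neg (mat_orth s) (by rw [← mat_mul, hss, mat_one]) (heig s hs1) hws0 hwsf hus,
      neg_neg]
  have hcontr := heig (s * t) hst1
  rw [fixedSpaceDim_eq] at hcontr
  have h5 := le_trans hrank (Submodule.finrank_mono hle)
  omega

theorem even_case (hm : Odd m) (hm5 : 5 ≤ m) [Finite ↥G]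
    (heig : ∀ g : ↥G, g ≠ 1 → fixedSpaceDim (mat g) ≤ 1)
    (K : Subgroup ↥G) (hKmem : ∀ g : ↥G, g ∈ K ↔ (mat g).det = 1)
    (heven : Even (Nat.card ↥K)) :
    ∃ v : Fin m → ℝ, v ⬝ᵥ v = 1 ∧ (∀ g : ↥G, (mat g).det = 1 → mat g *ᵥ v = v) ∧
      (∀ g : ↥G, mat g *ᵥ v = v ∨ mat g *ᵥ v = -v) := by
  classical
  haveI : Fintype ↥K := Fintype.ofFinite _
  have hcpos : 0 < Nat.card ↥K := Nat.card_pos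
  have h2dvd : (2 : ℕ) ∣ Nat.card ↥K := heven.two_dvd
  obtain ⟨t₀, ht₀⟩ := exists_prime_orderOf_dvd_card' (G := ↥K) 2 h2dvd
  set t : ↥G := (t₀ : ↥G) with ht_def
  have ht1 : t ≠ 1 := by
    intro h
    have : t₀ = 1 := Subtype.ext h
    rw [this, orderOf_one] at ht₀
    norm_num at ht₀
  have htt : t * t = 1 := by
    have h1 : t₀ ^ 2 = 1 := by rw [← ht₀]; exact pow_orderOf_eq_one t₀
    have h2 : t ^ 2 = 1 := by
      rw [ht_def, ← SubgroupClass.coe_pow, h1, OneMemClass.coe_one]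
    rwa [sq] at h2
  have htdet : (mat t).det = 1 := (hKmem t).mp t₀.2
  have httm : mat t * mat t = 1 := by rw [← mat_mul, htt, mat_one]
  obtain ⟨w₀, hw₀0, hw₀f⟩ := exists_fixed (mat_orth t)
    (by rw [htdet, hm.neg_one_pow]; norm_num)
  set v : Fin m → ℝ := (Real.sqrt (w₀ ⬝ᵥ w₀))⁻¹ • w₀ with hv_def
  have hv1 : v ⬝ᵥ v = 1 := unit_scale hw₀0
  have hv0 : v ≠ 0 := by
    intro h
    rw [h] at hv1
    simp at hv1
  have hvf : mat t *ᵥ v = v := by rw [hv_def, Matrix.mulVec_smul, hw₀f]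
  have hdet_sq : ∀ g : ↥G, (mat g).det * (mat g).det = 1 := by
    intro g
    rcases det_pm (mat_orth g) with h | h <;> rw [h] <;> norm_num
  have hdet_inv : ∀ g : ↥G, (mat g⁻¹).det = (mat g).det := by
    intro g
    rw [mat_inv, Matrix.det_transpose]
  have conj_eq : ∀ g : ↥G, g * t * g⁻¹ = t := by
    intro g
    apply invol_unique hm hm5 heig (conj_ne_one ht1) ht1 ?_ htt ?_ htdet
    · rw [show g * t * g⁻¹ * (g * t * g⁻¹) = g * (t * t) * g⁻¹ by group, htt, mul_one,
        mul_inv_cancel]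
    · rw [mat_mul, mat_mul, Matrix.det_mul, Matrix.det_mul, hdet_inv, htdet, mul_one]
      exact hdet_sq g
  have comm_t : ∀ g : ↥G, mat t *ᵥ (mat g *ᵥ v) = mat g *ᵥ v := by
    intro g
    have h1 : g * t = t * g := by
      have h2 := conj_eq g
      calc g * t = g * t * g⁻¹ * g := by rw [inv_mul_cancel_right]
      _ = t * g := by rw [h2]
    have h3 : mat t * mat g = mat g * mat t := by
      rw [← mat_mul, ← mat_mul, h1]
    rw [Matrix.mulVec_mulVec, h3, ← Matrix.mulVec_mulVec, hvf]
  have clause3 : ∀ g : ↥G, mat g *ᵥ v = v ∨ mat g *ᵥ v = -v := by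
    intro g
    obtain ⟨c, hc⟩ := fixed_smul (heig t ht1) hv0 hvf (comm_t g)
    have hnorm := dot_mulVec_mulVec (mat_orth g) v v
    rw [hc, smul_dotProduct, dotProduct_smul, hv1] at hnorm
    have hc2 : c * c = 1 := by simpa using hnorm
    rcases mul_self_eq_one_iff.mp hc2 with h | h
    · left
      rw [hc, h, one_smul]
    · right
      rw [hc, h]
      ext i
      simp
  refine ⟨v, hv1, ?_, clause3⟩
  intro g hgdet
  rcases clause3 g with h | hgv
  · exact h
  exfalso
  obtain ⟨w, hw0, hwf⟩ := exists_fixed (mat_orth g)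
    (by rw [hgdet, hm.neg_one_pow]; norm_num)
  have hvw : v ⬝ᵥ w = 0 := by
    have h1 := dot_mulVec_mulVec (mat_orth g) v w
    rw [hgv, hwf, neg_dotProduct] at h1
    linarith
  have htw : mat t *ᵥ w = -w := invol_perp_neg (mat_orth t) httm (heig t ht1) hv0 hvf hvw
  set u : ↥G := g * t with hu_def
  have hu_v : mat u *ᵥ v = -v := by
    rw [hu_def, mat_mul, ← Matrix.mulVec_mulVec, hvf, hgv]
  have hu_w : mat u *ᵥ w = -w := by
    rw [hu_def, mat_mul, ← Matrix.mulVec_mulVec, htw, Matrix.mulVec_neg, hwf]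
  have hu2v : mat (u * u) *ᵥ v = v := by
    rw [mat_mul, ← Matrix.mulVec_mulVec, hu_v, Matrix.mulVec_neg, hu_v, neg_neg]
  have hu2w : mat (u * u) *ᵥ w = w := by
    rw [mat_mul, ← Matrix.mulVec_mulVec, hu_w, Matrix.mulVec_neg, hu_w, neg_neg]
  have huu : u * u = 1 := by
    by_contra huu
    exact no_two_fixed (heig (u * u) huu) hv0 hu2v hu2w hvw hw0
  have hu1 : u ≠ 1 := by
    intro h
    rw [h, mat_one, Matrix.one_mulVec] at hu_v
    apply hv0
    have h2 : (2 : ℝ) • v = 0 := by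
      rw [two_smul]
      linear_combination (norm := module) hu_v
    rcases smul_eq_zero.mp h2 with h | h
    · norm_num at h
    · exact h
  have hudet : (mat u).det = 1 := by
    rw [hu_def, mat_mul, Matrix.det_mul, hgdet, htdet, mul_one]
  have hut : u = t := invol_unique hm hm5 heig hu1 ht1 huu htt hudet htdet
  have hg1 : g = 1 := by
    rw [hu_def] at hut
    calc g = g * t * t⁻¹ := by rw [mul_inv_cancel_right]
    _ = t * t⁻¹ := by rw [hut]
    _ = 1 := mul_inv_cancel t
  rw [hg1, mat_one, Matrix.one_mulVec] at hgv
  apply hv0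
  have h2 : (2 : ℝ) • v = 0 := by
    rw [two_smul]
    linear_combination (norm := module) hgv
  rcases smul_eq_zero.mp h2 with h | h
  · norm_num at h
  · exact h

/-- The key geometric lemma: existence of a common (up to sign) fixed unit vector. -/
theorem common_fixed (hm : Odd m) (hm5 : 5 ≤ m) [Finite ↥G]
    (heig : ∀ g : ↥G, g ≠ 1 → fixedSpaceDim (mat g) ≤ 1) :
    ∃ v : Fin m → ℝ, v ⬝ᵥ v = 1 ∧ (∀ g : ↥G, (mat g).det = 1 → mat g *ᵥ v = v) ∧
      (∀ g : ↥G, mat g *ᵥ v = v ∨ mat g *ᵥ v = -v) := by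
  classical
  by_cases hKtriv : ∀ g : ↥G, (mat g).det = 1 → g = 1
  · -- the rotation subgroup is trivial: every nontrivial element is -1
    have hm0 : 0 < m := by omega
    set v : Fin m → ℝ := Pi.single (⟨0, hm0⟩ : Fin m) (1 : ℝ) with hv_def
    have hv1 : v ⬝ᵥ v = 1 := by
      rw [hv_def, dotProduct_single]
      simp
    refine ⟨v, hv1, ?_, ?_⟩
    · intro g hgdet
      rw [hKtriv g hgdet, mat_one, Matrix.one_mulVec]
    · intro g
      rcases det_pm (mat_orth g) with hd | hd
      · left
        rw [hKtriv g hd, mat_one, Matrix.one_mulVec]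
      · have hg1 : g ≠ 1 := by
          intro h
          rw [h, mat_one, Matrix.det_one] at hd
          norm_num at hd
        have hgg : g * g = 1 := by
          apply hKtriv
          rw [mat_mul, Matrix.det_mul, hd]
          norm_num
        have hggm : mat g * mat g = 1 := by rw [← mat_mul, hgg, mat_one]
        have hnof : ∀ w : Fin m → ℝ, mat g *ᵥ w = w → w = 0 := by
          intro w hw
          by_contra hw0
          have hwsf : mat g *ᵥ ((Real.sqrt (w ⬝ᵥ w))⁻¹ • w) = (Real.sqrt (w ⬝ᵥ w))⁻¹ • w := by
            rw [Matrix.mulVec_smul, hw]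
          have hdet1 := invol_det hm (mat_orth g) hggm (heig g hg1) (unit_scale hw0) hwsf
          rw [hd] at hdet1
          norm_num at hdet1
        have hneg : mat g = -1 := invol_eq_neg_one hggm hnof
        right
        rw [hneg, show (-1 : Matrix (Fin m) (Fin m) ℝ) = -(1 : Matrix (Fin m) (Fin m) ℝ) from rfl,
          Matrix.neg_mulVec, Matrix.one_mulVec]
  · push_neg at hKtriv
    obtain ⟨g₀, hg₀det, hg₀1⟩ := hKtriv
    set K : Subgroup ↥G :=
      { carrier := {g : ↥G | (mat g).det = 1}
        mul_mem' := by
          intro a b ha hb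
          simp only [Set.mem_setOf_eq] at ha hb ⊢
          rw [mat_mul, Matrix.det_mul, ha, hb, mul_one]
        one_mem' := by
          simp only [Set.mem_setOf_eq]
          rw [mat_one, Matrix.det_one]
        inv_mem' := by
          intro a ha
          simp only [Set.mem_setOf_eq] at ha ⊢
          rw [mat_inv, Matrix.det_transpose, ha] } with hK_def
    have hKmem : ∀ g : ↥G, g ∈ K ↔ (mat g).det = 1 := fun g => Iff.rfl
    rcases Nat.even_or_odd (Nat.card ↥K) with he | ho
    · exact even_case hm hm5 heig K hKmem he
    · have hg₀K : g₀ ∈ K := (hKmem g₀).mpr hg₀det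
      obtain ⟨v, hv1, hfix⟩ := odd_case hm heig K (fun g hg => (hKmem g).mp hg) ho
        ⟨g₀, hg₀K⟩ (by
          intro h
          exact hg₀1 (congrArg Subtype.val h))
      have hv0 : v ≠ 0 := by
        intro h
        rw [h] at hv1
        simp at hv1
      refine ⟨v, hv1, fun g hdet => hfix g ((hKmem g).mpr hdet), ?_⟩
      intro g
      set s : ↥G := g⁻¹ * g₀ * g with hs_def
      have hsK : s ∈ K := by
        rw [hKmem, hs_def, mat_mul, mat_mul, Matrix.det_mul, Matrix.det_mul, mat_inv,
          Matrix.det_transpose, hg₀det, mul_one]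
        rcases det_pm (mat_orth g) with hd | hd <;> rw [hd] <;> norm_num
      have hsv : mat s *ᵥ v = v := hfix s hsK
      have hkey : mat g₀ *ᵥ (mat g *ᵥ v) = mat g *ᵥ v := by
        have h1 : g * s = g₀ * g := by
          rw [hs_def]
          group
        have h2 : mat g * mat s = mat g₀ * mat g := by
          rw [← mat_mul, ← mat_mul, h1]
        rw [Matrix.mulVec_mulVec, ← h2, ← Matrix.mulVec_mulVec, hsv]
      obtain ⟨c, hc⟩ := fixed_smul (heig g₀ hg₀1) hv0 (hfix g₀ hg₀K) hkey
      have hnorm := dot_mulVec_mulVec (mat_orth g) v v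
      rw [hc, smul_dotProduct, dotProduct_smul, hv1] at hnorm
      have hc2 : c * c = 1 := by simpa using hnorm
      rcases mul_self_eq_one_iff.mp hc2 with h | h
      · left
        rw [hc, h, one_smul]
      · right
        rw [hc, h]
        ext i
        simp


end SplitAux

/-- Let `G` be a finite subgroup of `O(2n+1)`, `n ≥ 2`, with every nontrivial element having
eigenspace of eigenvalue `1` of dimension at most one. Then there are a unit vector `v` and a
character `χ : G → {±1}` such that every `g ∈ G` satisfies `g(v) = χ(g)·v`, preserves the
orthogonal complement of `v`, and `G` acts freely on the unit sphere of that complement. -/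
theorem splitting_of_finite_orthogonal_group
    (n : ℕ) (hn : 2 ≤ n)
    (G : Subgroup (Matrix.orthogonalGroup (Fin (2*n+1)) ℝ)) (hG : Finite G)
    (heig : ∀ g ∈ G, g ≠ 1 →
      fixedSpaceDim (g : Matrix (Fin (2*n+1)) (Fin (2*n+1)) ℝ) ≤ 1) :
    ∃ v : Fin (2*n+1) → ℝ, dotProduct v v = 1 ∧
      ∃ χ : G →* ℝˣ,
        (∀ g : G, (χ g : ℝ) = 1 ∨ (χ g : ℝ) = -1) ∧
        (∀ g : G, Matrix.mulVec
            ((g : Matrix.orthogonalGroup (Fin (2*n+1)) ℝ) :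
              Matrix (Fin (2*n+1)) (Fin (2*n+1)) ℝ) v = (χ g : ℝ) • v) ∧
        (∀ g : G, ∀ w : Fin (2*n+1) → ℝ, dotProduct v w = 0 →
          dotProduct v (Matrix.mulVec
            ((g : Matrix.orthogonalGroup (Fin (2*n+1)) ℝ) :
              Matrix (Fin (2*n+1)) (Fin (2*n+1)) ℝ) w) = 0) ∧
        (∀ g : G, (g : Matrix.orthogonalGroup (Fin (2*n+1)) ℝ) ≠ 1 →
          ∀ w : Fin (2*n+1) → ℝ, dotProduct v w = 0 → w ≠ 0 →
            Matrix.mulVec ((g : Matrix.orthogonalGroup (Fin (2*n+1)) ℝ) :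
              Matrix (Fin (2*n+1)) (Fin (2*n+1)) ℝ) w ≠ w) := by
  open Matrix in
  classical
  haveI := hG
  have hmodd : Odd (2 * n + 1) := ⟨n, by omega⟩
  have hm5 : 5 ≤ 2 * n + 1 := by omega
  -- reformulate heig
  have heig' : ∀ g : ↥G, g ≠ 1 → fixedSpaceDim (SplitAux.mat g) ≤ 1 := by
    intro g hg
    refine heig g.val g.2 ?_
    intro h
    exact hg (Subtype.ext h)
  obtain ⟨v, hv1, hvK, hvpm⟩ := SplitAux.common_fixed hmodd hm5 heig'
  have hv0 : v ≠ 0 := by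
    intro h
    rw [h] at hv1
    simp at hv1
  -- the sign function
  set ε : ↥G → ℝ := fun g => if SplitAux.mat g *ᵥ v = v then (1 : ℝ) else -1 with hε_def
  have hsign : ∀ g : ↥G, SplitAux.mat g *ᵥ v = ε g • v ∧ (ε g = 1 ∨ ε g = -1) := by
    intro g
    by_cases h : SplitAux.mat g *ᵥ v = v
    · have he : ε g = 1 := by rw [hε_def]; simp [h]
      rw [he, one_smul]
      exact ⟨h, Or.inl rfl⟩
    · have he : ε g = -1 := by rw [hε_def]; simp [h]
      rcases hvpm g with h' | h'
      · exact absurd h' h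
      · rw [he, h']
        refine ⟨?_, Or.inr rfl⟩
        ext i
        simp
  have hmul : ∀ g h : ↥G, ε (g * h) = ε g * ε h := by
    intro g h
    have h1 : SplitAux.mat (g * h) *ᵥ v = (ε g * ε h) • v := by
      rw [SplitAux.mat_mul, ← Matrix.mulVec_mulVec, (hsign h).1, Matrix.mulVec_smul,
        (hsign g).1, smul_smul, mul_comm (ε h) (ε g)]
    exact SplitAux.smul_cancel hv0 ((hsign (g * h)).1.symm.trans h1)
  have hone : ε 1 = 1 := by
    rw [hε_def]
    simp only
    rw [if_pos]
    rw [SplitAux.mat_one, Matrix.one_mulVec]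
  have hsq : ∀ g : ↥G, ε g * ε g = 1 := by
    intro g
    rcases (hsign g).2 with h | h <;> rw [h] <;> norm_num
  let χ : ↥G →* ℝˣ :=
    { toFun := fun g => ⟨ε g, ε g, hsq g, hsq g⟩
      map_one' := by ext; exact hone
      map_mul' := by intro g h; ext; exact hmul g h }
  refine ⟨v, hv1, χ, ?_, ?_, ?_, ?_⟩
  · intro g
    exact (hsign g).2
  · intro g
    exact (hsign g).1
  · -- preserves complement
    intro g w hw
    show dotProduct v (SplitAux.mat g *ᵥ w) = 0
    have hginv : SplitAux.mat g⁻¹ *ᵥ v = ε g • v := by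
      have h1 : SplitAux.mat g⁻¹ *ᵥ (SplitAux.mat g *ᵥ v) = v := SplitAux.mat_inv_mulVec_mulVec g v
      rw [(hsign g).1, Matrix.mulVec_smul] at h1
      calc SplitAux.mat g⁻¹ *ᵥ v = (ε g * ε g) • (SplitAux.mat g⁻¹ *ᵥ v) := by
            rw [hsq g, one_smul]
      _ = ε g • (ε g • (SplitAux.mat g⁻¹ *ᵥ v)) := by rw [smul_smul]
      _ = ε g • v := by rw [h1]
    have : dotProduct v (SplitAux.mat g *ᵥ w) = (SplitAux.mat g⁻¹ *ᵥ v) ⬝ᵥ w := by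
      rw [SplitAux.dot_mulVec_left, SplitAux.mat_inv]
    rw [this, hginv, smul_dotProduct, hw, smul_zero]
  · -- free action
    intro g hg1 w hvw hw0 hgw0
    have hgw : SplitAux.mat g *ᵥ w = w := hgw0
    have hgne : g ≠ 1 := fun h => hg1 (by rw [h]; rfl)
    rcases hvpm g with hgv | hgv
    · exact SplitAux.no_two_fixed (heig' g hgne) hv0 hgv hgw hvw hw0
    · by_cases hgg : g * g = 1
      · -- g is an involution fixing w; compute det
        have hggm : SplitAux.mat g * SplitAux.mat g = 1 := by
          rw [← SplitAux.mat_mul, hgg, SplitAux.mat_one]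
        have hww : w ⬝ᵥ w > 0 := by
          rcases lt_or_eq_of_le (Finset.sum_nonneg (fun i _ => mul_self_nonneg (w i)) :
            (0:ℝ) ≤ w ⬝ᵥ w) with h | h
          · exact h
          · exact absurd (dotProduct_self_eq_zero.mp h.symm) hw0
        set c : ℝ := (Real.sqrt (w ⬝ᵥ w))⁻¹ with hc_def
        have hw'1 : (c • w) ⬝ᵥ (c • w) = 1 := by
          rw [smul_dotProduct, dotProduct_smul, smul_eq_mul, smul_eq_mul,
            hc_def]
          rw [← mul_assoc]
          rw [← Real.sqrt_inv]
          have : Real.sqrt (w ⬝ᵥ w)⁻¹ * Real.sqrt (w ⬝ᵥ w)⁻¹ = (w ⬝ᵥ w)⁻¹ :=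
            Real.mul_self_sqrt (by positivity)
          rw [this]
          field_simp
        have hw'fix : SplitAux.mat g *ᵥ (c • w) = c • w := by
          rw [Matrix.mulVec_smul, hgw]
        have hdet : (SplitAux.mat g).det = 1 :=
          SplitAux.invol_det hmodd (SplitAux.mat_orth g) hggm (heig' g hgne) hw'1 hw'fix
        have := hvK g hdet
        rw [hgv] at this
        have : v = 0 := by
          have h2 : (2 : ℝ) • v = 0 := by
            rw [two_smul]
            linear_combination (norm := module) (-1 : ℝ) • this
          rcases smul_eq_zero.mp h2 with h | h
          · norm_num at h
          · exact h
        exact hv0 this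
      · -- g² ≠ 1 fixes both v and w
        have hggne : g * g ≠ 1 := hgg
        have h1 : SplitAux.mat (g * g) *ᵥ v = v := by
          rw [SplitAux.mat_mul, ← Matrix.mulVec_mulVec, hgv, Matrix.mulVec_neg, hgv, neg_neg]
        have h2 : SplitAux.mat (g * g) *ᵥ w = w := by
          rw [SplitAux.mat_mul, ← Matrix.mulVec_mulVec, hgw, hgw]
        exact SplitAux.no_two_fixed (heig' (g * g) hggne) hv0 h1 h2 hvw hw0
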